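/- For every b > 0 one has F(b) < 1/b; equivalently, φ(b)/Φ(−b) < b + 1/b for all b > 0. -/

import Mathlib

open MeasureTheory Filter Topology

/-- Standard normal density. -/
noncomputable def phi (x : ℝ) : ℝ := Real.exp (-x ^ 2 / 2) / Real.sqrt (2 * Real.pi)

/-- Standard normal cumulative distribution function. -/
noncomputable def Phi (x : ℝ) : ℝ := ∫ t in Set.Iio x, phi t

/-- Mills-type ratio. -/
noncomputable def r (b : ℝ) : ℝ := phi b / Phi (-b)

/-- The deficit transformation `F`. -/
noncomputable def F (b : ℝ) : ℝ := phi b / Phi (-b) - b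

lemma phi_pos (x : ℝ) : 0 < phi x :=
  div_pos (Real.exp_pos _) (Real.sqrt_pos.2 (by positivity))

lemma phi_cont : Continuous phi := by
  unfold phi; fun_prop

lemma integrable_phi : Integrable phi := by
  have h := (integrable_exp_neg_mul_sq (b := (1:ℝ)/2) (by norm_num)).div_const
    (Real.sqrt (2*Real.pi))
  apply h.congr
  filter_upwards with x
  unfold phi
  ring_nf

lemma hasDerivAt_phi (x : ℝ) : HasDerivAt phi (-x * phi x) x := by
  have h1 : HasDerivAt (fun x : ℝ => -x ^ 2 / 2) (-x) x := by
    have := ((hasDerivAt_pow 2 x).neg).div_const 2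
    simpa using this.congr_deriv (by ring)
  have h2 := (h1.exp).div_const (Real.sqrt (2 * Real.pi))
  unfold phi
  refine h2.congr_deriv ?_
  ring

noncomputable def Tt (x : ℝ) : ℝ := ∫ t in Set.Ioi x, phi t

noncomputable def gg (x : ℝ) : ℝ := x / (1 + x ^ 2) * phi x

noncomputable def DD (x : ℝ) : ℝ := 2 / (1 + x ^ 2) ^ 2 * phi x

lemma DD_cont : Continuous DD := by
  apply Continuous.mul _ phi_cont
  exact continuous_const.div (by continuity) (fun x => by positivity)

lemma DD_pos (x : ℝ) : 0 < DD x := by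
  have := phi_pos x
  unfold DD
  positivity

lemma hasDerivAt_gg (x : ℝ) : HasDerivAt gg (DD x - phi x) x := by
  have hne : (1 : ℝ) + x ^ 2 ≠ 0 := by positivity
  have h1 : HasDerivAt (fun x : ℝ => 1 + x ^ 2) (2 * x) x := by
    simpa using (hasDerivAt_pow 2 x).const_add 1
  have h2 : HasDerivAt (fun x : ℝ => x / (1 + x ^ 2))
      ((1 * (1 + x ^ 2) - x * (2 * x)) / (1 + x ^ 2) ^ 2) x :=
    (hasDerivAt_id x).div h1 hne
  have h3 := h2.mul (hasDerivAt_phi x)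
  refine h3.congr_deriv ?_
  unfold DD
  field_simp
  ring

lemma Tt_sub {x y : ℝ} (h : x ≤ y) : Tt x - Tt y = ∫ t in x..y, phi t := by
  have hu : Set.Ioc x y ∪ Set.Ioi y = Set.Ioi x := Set.Ioc_union_Ioi_eq_Ioi h
  rw [Tt, Tt, ← hu, setIntegral_union (Set.Ioc_disjoint_Ioi le_rfl) measurableSet_Ioi
    integrable_phi.integrableOn integrable_phi.integrableOn,
    intervalIntegral.integral_of_le h]
  ring

lemma H_diff {x y : ℝ} (h : x ≤ y) :
    (Tt x - gg x) - (Tt y - gg y) = ∫ t in x..y, DD t := by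
  have h1 : ∫ t in x..y, (DD t - phi t) = gg y - gg x :=
    intervalIntegral.integral_eq_sub_of_hasDerivAt (fun t _ => hasDerivAt_gg t)
      ((DD_cont.sub phi_cont).intervalIntegrable x y)
  have h2 : ∫ t in x..y, DD t = (∫ t in x..y, (DD t - phi t)) + ∫ t in x..y, phi t := by
    rw [← intervalIntegral.integral_add (f := fun t => DD t - phi t) (g := phi) ((DD_cont.sub phi_cont).intervalIntegrable x y)
      (phi_cont.intervalIntegrable x y)]
    simp
  rw [h2, h1, ← Tt_sub h]
  ring

lemma tendsto_phi : Tendsto phi atTop (𝓝 0) := by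
  have h1 : Tendsto (fun x : ℝ => x ^ 2) atTop atTop := tendsto_pow_atTop (by norm_num)
  have h2 : Tendsto (fun x : ℝ => -x ^ 2 / 2) atTop atBot :=
    (tendsto_neg_atTop_atBot.comp h1).atBot_div_const (by norm_num)
  have h3 := (Real.tendsto_exp_atBot.comp h2).div_const (Real.sqrt (2 * Real.pi))
  rw [zero_div] at h3
  exact h3.congr (fun x => rfl)

lemma tendsto_gg : Tendsto gg atTop (𝓝 0) := by
  apply squeeze_zero_norm _ tendsto_phi
  intro x
  have hx : |x| ≤ 1 + x ^ 2 := by nlinarith [sq_abs x, sq_nonneg (|x| - 1)]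
  have hp := phi_pos x
  have hne : (0:ℝ) < 1 + x ^ 2 := by positivity
  rw [gg, norm_mul, norm_div]
  calc ‖x‖ / ‖1 + x ^ 2‖ * ‖phi x‖ ≤ 1 * ‖phi x‖ := by
        apply mul_le_mul_of_nonneg_right _ (norm_nonneg _)
        rw [div_le_one (by simpa [abs_of_pos hne] using hne)]
        simpa [Real.norm_eq_abs, abs_of_pos hne] using hx
    _ = phi x := by rw [one_mul, Real.norm_eq_abs, abs_of_pos hp]

lemma tendsto_Tt : Tendsto Tt atTop (𝓝 0) := by
  have h := tendsto_setIntegral_of_antitone (μ := volume) (f := phi) (ι := ℝ)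
    (s := fun a => Set.Ioi a) (fun a => measurableSet_Ioi)
    (fun _ _ hab => Set.Ioi_subset_Ioi hab) ⟨0, integrable_phi.integrableOn⟩
  have h0 : ⋂ (a : ℝ), Set.Ioi a = (∅ : Set ℝ) := by
    ext x
    simp only [Set.mem_iInter, Set.mem_Ioi, Set.mem_empty_iff_false, iff_false, not_forall,
      not_lt]
    exact ⟨x, le_rfl⟩
  rw [h0] at h
  exact (by simpa using h : Tendsto (fun i => ∫ x in Set.Ioi i, phi x) atTop (𝓝 0))

lemma H_nonneg (x : ℝ) : 0 ≤ Tt x - gg x := by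
  have hlim : Tendsto (fun y => Tt y - gg y) atTop (𝓝 0) := by
    simpa using tendsto_Tt.sub tendsto_gg
  refine le_of_tendsto hlim ?_
  filter_upwards [eventually_ge_atTop x] with y hy
  have := H_diff hy
  have hnn : 0 ≤ ∫ t in x..y, DD t :=
    intervalIntegral.integral_nonneg hy (fun t _ => (DD_pos t).le)
  linarith

lemma H_pos (x : ℝ) : 0 < Tt x - gg x := by
  have hd := H_diff (le_of_lt (lt_add_one x))
  have hpos : 0 < ∫ t in x..(x+1), DD t :=
    intervalIntegral.intervalIntegral_pos_of_pos (DD_cont.intervalIntegrable x (x+1))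
      DD_pos (lt_add_one x)
  have := H_nonneg (x + 1)
  linarith

lemma Phi_neg_eq (b : ℝ) : Phi (-b) = Tt b := by
  rw [Phi, Tt, ← integral_Iic_eq_integral_Iio, ← integral_comp_neg_Ioi]
  apply setIntegral_congr_fun measurableSet_Ioi
  intro x _
  simp [phi]


/-- For every `b > 0`, `F(b) < 1/b`; equivalently `φ(b)/Φ(−b) < b + 1/b`. -/
theorem F_lt_inv (b : ℝ) (hb : 0 < b) :
    F b < 1 / b ∧ phi b / Phi (-b) < b + 1 / b := by
  have hP : Phi (-b) > b / (1 + b ^ 2) * phi b := by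
    rw [Phi_neg_eq]
    have := H_pos b
    have hgg : gg b = b / (1 + b ^ 2) * phi b := rfl
    linarith
  have hp := phi_pos b
  have hPpos : 0 < Phi (-b) := lt_trans (by positivity) hP
  have hmain : phi b / Phi (-b) < b + 1 / b := by
    rw [div_lt_iff₀ hPpos]
    have key : (b + 1 / b) * (b / (1 + b ^ 2) * phi b) = phi b := by
      field_simp
      ring
    calc phi b = (b + 1 / b) * (b / (1 + b ^ 2) * phi b) := key.symm
      _ < (b + 1 / b) * Phi (-b) := by
          apply mul_lt_mul_of_pos_left hP
          positivity
  exact ⟨by unfold F; linarith, hmain⟩
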